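/- Let attn(q, K, V) = softmax(qKᵀ)V be dot-product attention with query q ∈ ℝˡ, keys K ∈ ℝ^{n×l} (rows k_t), and values V ∈ ℝ^{n×k} (rows v_t). If the scores q·k_t have a unique maximizer t* and q, K, V are scaled by N, then as N → ∞ attention converges to the limit of v_{t*} (assuming v_{t*} converges). -/

import Mathlib

open Filter Real

noncomputable def softmax {n : ℕ} (u : Fin n → ℝ) (t : Fin n) : ℝ :=
  Real.exp (u t) / ∑ s, Real.exp (u s)

lemma exp_mul_tendsto_zero {c : ℝ} (hc : c < 0) :
    Tendsto (fun N : ℝ => Real.exp (N * c)) atTop (nhds 0) := by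
  have h : Tendsto (fun N : ℝ => N * c) atTop atBot :=
    Tendsto.atTop_mul_const_of_neg hc tendsto_id
  exact Real.tendsto_exp_atBot.comp h

/-- Dot-product attention with scores scaled by `N`, values possibly depending on `N`. -/
theorem attention_unique_max_tendsto {n l k : ℕ}
    (q : Fin l → ℝ) (K : Fin n → Fin l → ℝ)
    (v : ℝ → Fin n → Fin k → ℝ) (L : Fin n → Fin k → ℝ)
    (hv : ∀ t i, Tendsto (fun N : ℝ => v N t i) atTop (nhds (L t i)))
    (tstar : Fin n)
    (hmax : ∀ s : Fin n, s ≠ tstar → (∑ i, q i * K s i) < ∑ i, q i * K tstar i)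
    (i : Fin k) :
    Tendsto
      (fun N : ℝ => ∑ t, softmax (fun s => N * ∑ j, q j * K s j) t * v N t i)
      atTop (nhds (L tstar i)) := by
  set u : Fin n → ℝ := fun s => ∑ j, q j * K s j with hu
  -- rewrite softmax with scores shifted by u tstar
  have key : ∀ (N : ℝ) (t : Fin n),
      softmax (fun s => N * u s) t =
        Real.exp (N * (u t - u tstar)) / ∑ s, Real.exp (N * (u s - u tstar)) := by
    intro N t
    have hs : ∀ s : Fin n, Real.exp (N * (u s - u tstar)) =
        Real.exp (N * u s) * Real.exp (-(N * u tstar)) := by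
      intro s; rw [← Real.exp_add]; ring_nf
    simp only [softmax, hs, ← Finset.sum_mul]
    rw [mul_div_mul_right _ _ (Real.exp_ne_zero _)]
  -- softmax limit
  have hsm : ∀ t : Fin n,
      Tendsto (fun N : ℝ => softmax (fun s => N * u s) t) atTop
        (nhds (if t = tstar then (1:ℝ) else 0)) := by
    intro t
    have hterm : ∀ s : Fin n, Tendsto (fun N : ℝ => Real.exp (N * (u s - u tstar)))
        atTop (nhds (if s = tstar then (1:ℝ) else 0)) := by
      intro s
      by_cases hst : s = tstar
      · simp [hst]
      · simpa [hst] using exp_mul_tendsto_zero (by linarith [hmax s hst] : u s - u tstar < 0)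
    have hden : Tendsto (fun N : ℝ => ∑ s, Real.exp (N * (u s - u tstar))) atTop
        (nhds 1) := by
      have := tendsto_finset_sum Finset.univ (fun s _ => hterm s)
      simpa [Finset.sum_ite_eq'] using this
    have := (hterm t).div hden one_ne_zero
    simp only [div_one] at this
    exact this.congr (fun N => (key N t).symm)
  have hsum : Tendsto
      (fun N : ℝ => ∑ t, softmax (fun s => N * u s) t * v N t i) atTop
      (nhds (∑ t, (if t = tstar then (1:ℝ) else 0) * L t i)) :=
    tendsto_finset_sum Finset.univ (fun t _ => (hsm t).mul (hv t i))
  simpa [Finset.sum_ite_eq', Finset.mem_univ] using hsum
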